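/- With A, B isometries, θ ∈ ℝ, L = [A B] the ν×(m+n) block matrix and Λ_θ the (m+n)×(m+n) block matrix −[[I, 2ie^{−iθ}sin(θ)·AᴴB],[2ie^{iθ}sin(θ)·BᴴA, I − 4sin²(θ)·BᴴA AᴴB]], we have U_θ L = L Λ_θ, where U_θ = −exp(iθ(2BBᴴ−I))·exp(iθ(2AAᴴ−I)). -/

import Mathlib

open Matrix NormedSpace Nat

lemma exp_mul_eigen {ν p : ℕ} (M : Matrix (Fin ν) (Fin ν) ℂ) (X : Matrix (Fin ν) (Fin p) ℂ)
    (c : ℂ) (h : M * X = c • X) : exp M * X = Complex.exp c • X := by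
  letI : SeminormedRing (Matrix (Fin ν) (Fin ν) ℂ) := Matrix.linftyOpSemiNormedRing
  letI : NormedRing (Matrix (Fin ν) (Fin ν) ℂ) := Matrix.linftyOpNormedRing
  letI : NormedAlgebra ℂ (Matrix (Fin ν) (Fin ν) ℂ) := Matrix.linftyOpNormedAlgebra
  have hpow : ∀ k : ℕ, M ^ k * X = c ^ k • X := by
    intro k
    induction k with
    | zero => simp
    | succ k ih =>
      rw [pow_succ, pow_succ, Matrix.mul_assoc, h, Matrix.mul_smul, ih, smul_smul, mul_comm]
  have hsum : Summable fun k : ℕ => ((k ! : ℂ))⁻¹ • M ^ k := expSeries_summable' (𝕂 := ℂ) M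
  let f : Matrix (Fin ν) (Fin ν) ℂ →ₗ[ℂ] Matrix (Fin ν) (Fin p) ℂ :=
    { toFun := fun Y => Y * X
      map_add' := fun a b => Matrix.add_mul a b X
      map_smul' := fun r a => Matrix.smul_mul r a X }
  have hf : Continuous f := f.continuous_of_finiteDimensional
  have key := (hsum.hasSum.map f hf).tsum_eq
  have hexp : exp M = ∑' k : ℕ, ((k ! : ℂ))⁻¹ • M ^ k := by rw [exp_eq_tsum ℂ]
  have : exp M * X = f (∑' k : ℕ, ((k ! : ℂ))⁻¹ • M ^ k) := by rw [hexp]; rfl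
  rw [this, ← key]
  have hterm : (⇑f ∘ fun k : ℕ => ((k ! : ℂ))⁻¹ • M ^ k) = fun k : ℕ =>
      (((k ! : ℂ))⁻¹ * c ^ k) • X := by
    funext k
    simp only [Function.comp_apply, _root_.map_smul, f, LinearMap.coe_mk, AddHom.coe_mk]
    rw [Matrix.smul_mul, hpow, smul_smul]
  have h2 : ∑' b : ℕ, (⇑f ∘ fun k : ℕ => ((k ! : ℂ))⁻¹ • M ^ k) b
      = ∑' b : ℕ, (((b ! : ℂ))⁻¹ * c ^ b) • X := by rw [hterm]
  rw [h2, Summable.tsum_smul_const ((expSeries_summable' (𝕂 := ℂ) c).congr (fun k => by rw [smul_eq_mul]))]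
  congr 1
  rw [Complex.exp_eq_exp_ℂ, exp_eq_tsum ℂ]
  exact tsum_congr fun k => by rw [smul_eq_mul]

lemma exp_proj {ν q p : ℕ} (C : Matrix (Fin ν) (Fin q) ℂ) (hC : Cᴴ * C = 1) (t : ℂ)
    (X : Matrix (Fin ν) (Fin p) ℂ) :
    exp (t • (2 • (C * Cᴴ) - 1)) * X
      = Complex.exp t • (C * (Cᴴ * X)) + Complex.exp (-t) • (X - C * (Cᴴ * X)) := by
  have hCC : ∀ {r : ℕ} (Y : Matrix (Fin q) (Fin r) ℂ), Cᴴ * (C * Y) = Y := fun Y => by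
    rw [← Matrix.mul_assoc, hC, Matrix.one_mul]
  have h1 : (t • (2 • (C * Cᴴ) - 1)) * (C * (Cᴴ * X)) = t • (C * (Cᴴ * X)) := by
    rw [Matrix.smul_mul]
    congr 1
    rw [Matrix.sub_mul, Matrix.one_mul, two_smul, Matrix.add_mul, Matrix.mul_assoc, hCC]
    abel
  have h2 : (t • (2 • (C * Cᴴ) - 1)) * (X - C * (Cᴴ * X)) = (-t) • (X - C * (Cᴴ * X)) := by
    have : (C * Cᴴ) * (X - C * (Cᴴ * X)) = 0 := by
      rw [Matrix.mul_sub, Matrix.mul_assoc, Matrix.mul_assoc, hCC, sub_self]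
    rw [Matrix.smul_mul, Matrix.sub_mul, Matrix.one_mul, two_smul, Matrix.add_mul, this]
    rw [add_zero, ← neg_sub, smul_neg, sub_zero, neg_smul]
  have hsplit : X = C * (Cᴴ * X) + (X - C * (Cᴴ * X)) := by abel
  conv_lhs => rw [hsplit]
  rw [Matrix.mul_add, exp_mul_eigen _ _ _ h1, exp_mul_eigen _ _ _ h2]

theorem stmt_10 {ν m n : ℕ} (A : Matrix (Fin ν) (Fin m) ℂ) (B : Matrix (Fin ν) (Fin n) ℂ)
    (hA : Aᴴ * A = 1) (hB : Bᴴ * B = 1) (θ : ℝ) :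
    let U : Matrix (Fin ν) (Fin ν) ℂ :=
      -(NormedSpace.exp ((Complex.I * (θ : ℂ)) • (2 • (B * Bᴴ) - 1))
        * NormedSpace.exp ((Complex.I * (θ : ℂ)) • (2 • (A * Aᴴ) - 1)))
    let L : Matrix (Fin ν) (Fin m ⊕ Fin n) ℂ := fromCols A B
    let Λ : Matrix (Fin m ⊕ Fin n) (Fin m ⊕ Fin n) ℂ :=
      -(fromBlocks 1
          ((2 * Complex.I * Complex.exp (-(Complex.I * (θ : ℂ))) * (Real.sin θ : ℂ)) • (Aᴴ * B))
          ((2 * Complex.I * Complex.exp (Complex.I * (θ : ℂ)) * (Real.sin θ : ℂ)) • (Bᴴ * A))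
          (1 - (4 * (Real.sin θ : ℂ) ^ 2) • (Bᴴ * A * (Aᴴ * B))))
    U * L = L * Λ := by
  intro U L Λ
  set t : ℂ := Complex.I * (θ : ℂ) with ht
  set e : ℂ := Complex.exp t with he
  set e' : ℂ := Complex.exp (-t) with he'
  have hee' : e * e' = 1 := by
    rw [he, he', ← Complex.exp_add, add_neg_cancel, Complex.exp_zero]
  set s : ℂ := (Real.sin θ : ℂ) with hs
  have h1 : e = Complex.cos θ + Complex.sin θ * Complex.I := by
    rw [he, ht, mul_comm, Complex.exp_mul_I]
  have h2 : e' = Complex.cos θ - Complex.sin θ * Complex.I := by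
    rw [he', ht, show -(Complex.I * (θ : ℂ)) = (-(θ : ℂ)) * Complex.I by ring,
      Complex.exp_mul_I, Complex.cos_neg, Complex.sin_neg]
    ring
  have hsin : 2 * Complex.I * s = e - e' := by
    rw [hs, Complex.ofReal_sin]
    linear_combination h2 - h1
  have hsin2 : 4 * s ^ 2 = 2 - e ^ 2 - e' ^ 2 := by
    linear_combination (-(2 * Complex.I * s + e - e')) * hsin + 2 * hee'
      + (4 * s ^ 2) * Complex.I_sq
  show -(exp (t • (2 • (B * Bᴴ) - 1)) * exp (t • (2 • (A * Aᴴ) - 1))) * L = L * Λ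
  rw [Matrix.neg_mul, show L * Λ = -(L * (fromBlocks 1
          ((2 * Complex.I * e' * (Real.sin θ : ℂ)) • (Aᴴ * B))
          ((2 * Complex.I * e * (Real.sin θ : ℂ)) • (Bᴴ * A))
          (1 - (4 * (Real.sin θ : ℂ) ^ 2) • (Bᴴ * A * (Aᴴ * B))))) from by
    simp [Λ, Matrix.mul_neg, he, he', ht], neg_inj]
  show exp (t • (2 • (B * Bᴴ) - 1)) * exp (t • (2 • (A * Aᴴ) - 1)) * fromCols A B = _
  rw [Matrix.mul_assoc, Matrix.mul_fromCols, Matrix.mul_fromCols,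
    fromCols_mul_fromBlocks]
  rw [exp_proj A hA t A, exp_proj A hA t B]
  rw [fromCols_ext_iff]
  constructor
  · rw [show e • (A * (Aᴴ * A)) + e' • (A - A * (Aᴴ * A)) = e • A from by rw [hA]; simp,
      Matrix.mul_smul, exp_proj B hB t A]
    simp only [Matrix.mul_one, Matrix.mul_smul, smul_add, smul_sub, smul_smul]
    match_scalars <;>
      · simp only [← Complex.ofReal_sin, ← he, ← he']
        first
        | linear_combination (-e) * hsin - hee'
        | linear_combination (-e) * hsin + hee'
        | linear_combination e * hsin - hee'
        | linear_combination e * hsin + hee'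
        | linear_combination (-e) * hsin
        | linear_combination e * hsin
        | linear_combination hee'
        | linear_combination -hee'
  · rw [Matrix.mul_add, Matrix.mul_smul, Matrix.mul_smul, Matrix.mul_sub,
      exp_proj B hB t (A * (Aᴴ * B)), exp_proj B hB t B]
    simp only [hB, Matrix.mul_one, Matrix.mul_smul, Matrix.mul_assoc, smul_add, smul_sub,
      smul_smul, Matrix.mul_sub]
    match_scalars <;>
      · simp only [← Complex.ofReal_sin, ← he, ← he', ← hs]
        first
        | linear_combination e' * hsin
        | linear_combination hee'
        | linear_combination -hee'
        | linear_combination (-e') * hsin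
        | linear_combination e' * hsin + hee'
        | linear_combination e' * hsin - hee'
        | linear_combination (-e') * hsin + hee'
        | linear_combination (-e') * hsin - hee'
        | linear_combination hsin2 - 2 * hee'
        | linear_combination -hsin2 - 2 * hee'
        | linear_combination hsin2 + 2 * hee'
        | linear_combination -hsin2 + 2 * hee'
        | linear_combination hsin2
        | linear_combination -hsin2
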